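/- Let V and E be finite sets, ⊑ a total order on V, and ♦ : ℤ^V × ℤ^V → ℤ^E an alternating ℤ-bilinear map. Then for every finite commutative ring A, cc(G_♦(A)) = |A|^{|E| − |V|} · Σ_{x ∈ A^V} |{y ∈ A^V : x ♦ y = 0 in A^E}|. -/

import Mathlib

/-- The group attached to a biadditive map `β` (Baer-type construction): the underlying
set is `X × C` with multiplication `(x, c) * (y, d) = (x + y, c + d + β x y)`. -/
@[ext]
structure Baer {X C : Type*} [AddCommGroup X] [AddCommGroup C] (β : X →+ X →+ C) where
  fst : X
  snd : C

namespace Baer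

variable {X C : Type*} [AddCommGroup X] [AddCommGroup C] {β : X →+ X →+ C}

instance : Mul (Baer β) := ⟨fun a b => ⟨a.fst + b.fst, a.snd + b.snd + β a.fst b.fst⟩⟩
instance : One (Baer β) := ⟨⟨0, 0⟩⟩
instance : Inv (Baer β) := ⟨fun a => ⟨-a.fst, -a.snd + β a.fst a.fst⟩⟩

instance : Group (Baer β) :=
  Group.ofLeftAxioms
    (fun a b c => by
      ext
      · show a.fst + b.fst + c.fst = a.fst + (b.fst + c.fst)
        exact add_assoc _ _ _
      · show a.snd + b.snd + β a.fst b.fst + c.snd + β (a.fst + b.fst) c.fst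
            = a.snd + (b.snd + c.snd + β b.fst c.fst) + β a.fst (b.fst + c.fst)
        rw [map_add, AddMonoidHom.add_apply, map_add]
        abel)
    (fun a => by
      ext
      · show 0 + a.fst = a.fst
        exact zero_add _
      · show 0 + a.snd + β 0 a.fst = a.snd
        rw [map_zero, AddMonoidHom.zero_apply]
        abel)
    (fun a => by
      ext
      · show -a.fst + a.fst = 0
        exact neg_add_cancel _
      · show -a.snd + β a.fst a.fst + a.snd + β (-a.fst) a.fst = 0
        rw [map_neg, AddMonoidHom.neg_apply]
        abel)

end Baer

/-- The biadditive map `(x, y) ↦ (f ↦ ∑ (v,w), x w * y v * c (v, w) f)` packaged as an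
additive group homomorphism in each argument. -/
noncomputable def pairBeta {V F A : Type*} [Fintype V] [CommRing A] (c : V × V → F → A) :
    (V → A) →+ (V → A) →+ (F → A) :=
  AddMonoidHom.mk'
    (fun x => AddMonoidHom.mk'
      (fun y => fun f => ∑ p : V × V, x p.2 * y p.1 * c p f)
      (fun y y' => by
        funext f
        simp only [Pi.add_apply]
        rw [← Finset.sum_add_distrib]
        exact Finset.sum_congr rfl fun p _ => by ring))
    (fun x x' => by
      refine AddMonoidHom.ext fun y => ?_
      funext f
      simp only [AddMonoidHom.mk'_apply, AddMonoidHom.add_apply, Pi.add_apply]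
      rw [← Finset.sum_add_distrib]
      exact Finset.sum_congr rfl fun p _ => by ring)

open Classical in
/-- The `A`-bilinear extension of a `ℤ`-bilinear map `♦ : ℤ^V × ℤ^V → ℤ^E`, namely
`x ♦ y = ∑ v w, x v * y w • (v ♦ w)`. -/
noncomputable def diamondExt {V E : Type*} [Fintype V]
    (d : (V → ℤ) →ₗ[ℤ] (V → ℤ) →ₗ[ℤ] (E → ℤ)) (A : Type*) [CommRing A]
    (x y : V → A) : E → A :=
  fun f => ∑ v : V, ∑ w : V, x v * y w * ((d (Pi.single v 1) (Pi.single w 1) f : ℤ) : A)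

open Classical in
/-- The commutator bimap `β x y = ∑_{v ⊏ w} (x w * y v) • (w ♦ v)` of the Baer group
attached to an alternating bilinear map `♦` and a total order on `V`. -/
noncomputable def baerBeta {V E : Type*} [Fintype V] [LinearOrder V]
    (d : (V → ℤ) →ₗ[ℤ] (V → ℤ) →ₗ[ℤ] (E → ℤ)) (A : Type*) [CommRing A] :
    (V → A) →+ (V → A) →+ (E → A) :=
  pairBeta fun p f =>
    if p.1 < p.2 then ((d (Pi.single p.2 1) (Pi.single p.1 1) f : ℤ) : A) else 0

section Aux

variable {V E : Type} [Fintype V] [Fintype E]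
  (d : (V → ℤ) →ₗ[ℤ] (V → ℤ) →ₗ[ℤ] (E → ℤ))
  (A : Type) [CommRing A]

set_option linter.unusedSectionVars false

open Classical in
/-- Structure constants of the bilinear map, over `A`. -/
noncomputable def cst (v w : V) (f : E) : A :=
  ((d (Pi.single v 1) (Pi.single w 1) f : ℤ) : A)

lemma cst_eq (i : DecidableEq V) (v w : V) (f : E) :
    ((d (@Pi.single V (fun _ => ℤ) _ i v 1) (@Pi.single V (fun _ => ℤ) _ i w 1) f : ℤ) : A)
      = cst d A v w f := by
  unfold cst
  congr!

lemma cst_anti (hd : ∀ x, d x x = 0) (v w : V) (f : E) :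
    cst d A v w f = - cst d A w v f := by
  letI i : DecidableEq V := Classical.decEq V
  rw [← cst_eq d A i v w f, ← cst_eq d A i w v f]
  have h0 := hd (Pi.single v 1 + Pi.single w 1)
  simp only [map_add, LinearMap.add_apply, hd, zero_add, add_zero] at h0
  have h1 := congrFun h0 f
  simp only [Pi.add_apply, Pi.zero_apply] at h1
  have h2 : d (Pi.single v 1) (Pi.single w 1) f
      = -(d (Pi.single w 1) (Pi.single v 1) f) := by omega
  rw [h2]
  push_cast
  ring

lemma cst_diag (hd : ∀ x, d x x = 0) (v : V) (f : E) :
    cst d A v v f = 0 := by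
  letI i : DecidableEq V := Classical.decEq V
  rw [← cst_eq d A i v v f, hd]
  simp

lemma diamondExt_eq (x y : V → A) (f : E) :
    diamondExt d A x y f = ∑ p : V × V, x p.1 * y p.2 * cst d A p.1 p.2 f := by
  simp only [diamondExt]
  conv_rhs => rw [Fintype.sum_prod_type (fun p : V × V => x p.1 * y p.2 * cst d A p.1 p.2 f)]
  exact Finset.sum_congr rfl fun v _ => Finset.sum_congr rfl fun w _ => by
    rw [cst_eq]

end Aux

section Aux2

variable {V E : Type} [Fintype V] [LinearOrder V] [Fintype E]
  (d : (V → ℤ) →ₗ[ℤ] (V → ℤ) →ₗ[ℤ] (E → ℤ)) (hd : ∀ x, d x x = 0)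
  (A : Type) [CommRing A]

set_option linter.unusedSectionVars false

lemma baerBeta_eq (x y : V → A) (f : E) :
    baerBeta d A x y f
      = ∑ p : V × V, x p.2 * y p.1 * (if p.1 < p.2 then cst d A p.2 p.1 f else 0) := by
  simp only [baerBeta, pairBeta, AddMonoidHom.mk'_apply]
  refine Finset.sum_congr rfl fun p _ => ?_
  by_cases h : p.1 < p.2
  · rw [if_pos h, if_pos h, cst_eq]
  · rw [if_neg h, if_neg h]

include hd

/-- Pointwise relation between the commutator bimap and the bilinear extension. -/
lemma baer_key (x y : V → A) (f : E) :
    baerBeta d A x y f = baerBeta d A y x f + diamondExt d A x y f := by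
  classical
  rw [baerBeta_eq, baerBeta_eq, diamondExt_eq, ← sub_eq_zero,
    ← Finset.sum_add_distrib, ← Finset.sum_sub_distrib]
  refine Finset.sum_ninvolution Prod.swap ?_ ?_ (fun _ => Finset.mem_univ _)
    (fun p => Prod.swap_swap p)
  · intro p
    obtain ⟨v, w⟩ := p
    rcases lt_trichotomy v w with h | h | h
    · simp only [Prod.swap_prod_mk, if_pos h, if_neg (not_lt.2 h.le)]
      have := cst_anti d A hd v w f
      linear_combination (-(x v * y w)) * this
    · subst h
      simp only [Prod.swap_prod_mk, if_neg (lt_irrefl v)]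
      have := cst_diag d A hd v f
      linear_combination (-2 * (x v * y v)) * this
    · simp only [Prod.swap_prod_mk, if_pos h, if_neg (not_lt.2 h.le)]
      have := cst_anti d A hd w v f
      linear_combination (-(x w * y v)) * this
  · intro p hp hswap
    apply hp
    obtain ⟨v, w⟩ := p
    have hvw : w = v := congrArg Prod.fst hswap
    subst hvw
    simp only [if_neg (lt_irrefl w), cst_diag d A hd w f]
    ring

lemma baer_beta_eq_iff (x y : V → A) :
    baerBeta d A x y = baerBeta d A y x ↔ diamondExt d A x y = 0 := by
  constructor
  · intro h
    funext f
    have h2 := congrFun h f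
    rw [baer_key d hd A x y f] at h2
    show diamondExt d A x y f = 0
    have : baerBeta d A y x f + diamondExt d A x y f = baerBeta d A y x f + 0 := by
      rw [add_zero]; exact h2
    simpa using add_left_cancel this
  · intro h
    funext f
    rw [baer_key d hd A x y f]
    have := congrFun h f
    simp only [Pi.zero_apply] at this
    rw [this, add_zero]

lemma baer_commute_iff (a b : Baer (baerBeta d A)) :
    Commute a b ↔ diamondExt d A a.fst b.fst = 0 := by
  rw [← baer_beta_eq_iff d hd A]
  constructor
  · intro hc
    have h := congrArg Baer.snd hc
    have h' : a.snd + b.snd + baerBeta d A a.fst b.fst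
        = b.snd + a.snd + baerBeta d A b.fst a.fst := h
    rw [add_comm b.snd a.snd] at h'
    exact add_left_cancel h'
  · intro h
    show a * b = b * a
    have h1 : (a * b).fst = (b * a).fst := add_comm a.fst b.fst
    have h2 : (a * b).snd = (b * a).snd := by
      show a.snd + b.snd + baerBeta d A a.fst b.fst
          = b.snd + a.snd + baerBeta d A b.fst a.fst
      rw [h]
      abel
    exact Baer.ext h1 h2

end Aux2

lemma nat_card_sigma' {ι : Type} [Fintype ι] (α : ι → Type) [∀ i, Finite (α i)] :
    Nat.card (Σ i, α i) = ∑ i, Nat.card (α i) := by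
  classical
  haveI : ∀ i, Fintype (α i) := fun i => Fintype.ofFinite _
  simp [Nat.card_eq_fintype_card, Fintype.card_sigma]

/-- For finite sets `V`, `E`, a total order on `V` and an alternating `ℤ`-bilinear map
`♦ : ℤ^V × ℤ^V → ℤ^E`, the number of conjugacy classes of the Baer group `G_♦(A)` over a
finite commutative ring `A` equals
`|A|^(|E| - |V|) · ∑_{x ∈ A^V} |{y ∈ A^V : x ♦ y = 0}|`. -/
theorem baer_group_class_number (V E : Type) [Fintype V] [LinearOrder V] [Fintype E]
    (d : (V → ℤ) →ₗ[ℤ] (V → ℤ) →ₗ[ℤ] (E → ℤ)) (hd : ∀ x, d x x = 0)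
    (A : Type) [CommRing A] [Fintype A] :
    (Nat.card (ConjClasses (Baer (baerBeta d A))) : ℚ)
      = (Fintype.card A : ℚ) ^ ((Fintype.card E : ℤ) - (Fintype.card V : ℤ)) *
          ∑ x : V → A, (Nat.card {y : V → A // diamondExt d A x y = 0} : ℚ) := by
  classical
  set G := Baer (baerBeta d A) with hGdef
  have hBur := card_comm_eq_card_conjClasses_mul_card G
  -- the underlying set of `G`
  let eG : G ≃ (V → A) × (E → A) :=
    { toFun := fun g => (g.fst, g.snd)
      invFun := fun p => ⟨p.1, p.2⟩
      left_inv := fun g => rfl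
      right_inv := fun p => rfl }
  have hG : Nat.card G = Fintype.card A ^ Fintype.card V * Fintype.card A ^ Fintype.card E := by
    rw [Nat.card_congr eG, Nat.card_prod, Nat.card_fun, Nat.card_fun]
    simp [Nat.card_eq_fintype_card]
  -- the commuting pairs
  let eC : {p : G × G // Commute p.1 p.2}
      ≃ {q : (V → A) × (V → A) // diamondExt d A q.1 q.2 = 0} × ((E → A) × (E → A)) :=
    { toFun := fun p => (⟨(p.1.1.fst, p.1.2.fst), (baer_commute_iff d hd A _ _).mp p.2⟩,
        (p.1.1.snd, p.1.2.snd))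
      invFun := fun q => ⟨(⟨q.1.1.1, q.2.1⟩, ⟨q.1.1.2, q.2.2⟩),
        (baer_commute_iff d hd A _ _).mpr q.1.2⟩
      left_inv := fun p => rfl
      right_inv := fun q => rfl }
  have hT : Nat.card {q : (V → A) × (V → A) // diamondExt d A q.1 q.2 = 0}
      = ∑ x : V → A, Nat.card {y : V → A // diamondExt d A x y = 0} := by
    rw [Nat.card_congr (Equiv.subtypeProdEquivSigmaSubtype fun x y => diamondExt d A x y = 0),
      nat_card_sigma']
  have hC : Nat.card {p : G × G // Commute p.1 p.2}
      = (∑ x : V → A, Nat.card {y : V → A // diamondExt d A x y = 0})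
        * (Fintype.card A ^ Fintype.card E * Fintype.card A ^ Fintype.card E) := by
    rw [Nat.card_congr eC, Nat.card_prod, Nat.card_prod, Nat.card_fun, hT]
    simp [Nat.card_eq_fintype_card]
  rw [hC, hG] at hBur
  have ha : (Fintype.card A : ℚ) ≠ 0 := by
    exact_mod_cast Fintype.card_ne_zero (α := A)
  have hq : (∑ x : V → A, (Nat.card {y : V → A // diamondExt d A x y = 0} : ℚ))
        * ((Fintype.card A : ℚ) ^ Fintype.card E * (Fintype.card A : ℚ) ^ Fintype.card E)
      = (Nat.card (ConjClasses G) : ℚ)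
        * ((Fintype.card A : ℚ) ^ Fintype.card V * (Fintype.card A : ℚ) ^ Fintype.card E) := by
    exact_mod_cast congrArg (Nat.cast : ℕ → ℚ) hBur
  have key2 : (Nat.card (ConjClasses G) : ℚ) * (Fintype.card A : ℚ) ^ Fintype.card V
      = (∑ x : V → A, (Nat.card {y : V → A // diamondExt d A x y = 0} : ℚ))
        * (Fintype.card A : ℚ) ^ Fintype.card E := by
    apply mul_right_cancel₀ (pow_ne_zero (Fintype.card E) ha)
    linear_combination -hq
  rw [zpow_sub₀ ha, zpow_natCast, zpow_natCast, div_mul_eq_mul_div,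
    eq_div_iff (pow_ne_zero (Fintype.card V) ha)]
  linear_combination key2
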